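/- Let L ≥ 2 be an integer, let s0 be an integer with 0 < s0 < L, let t′ ≥ 1 and r′ ∈ ℤ. Then Σ_{k∈ℤ} [C(t′, r′+kL) − C(t′, r′+s0+kL)] = (4/L) Σ_{k=1}^{⌊(L−1)/2⌋} 2^{t′} cos^{t′}(πk/L) · sin(πk s0/L) · sin(πk(2r′+s0−t′)/L). -/

import Mathlib

open Finset


/-- Binomial coefficient `C(n,k)` with integer lower index `k`, equal to `0`
unless `0 ≤ k ≤ n`. -/
def Cb (n : ℕ) (k : ℤ) : ℤ := if 0 ≤ k ∧ k ≤ (n : ℤ) then (n.choose k.toNat : ℤ) else 0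


lemma filter_sum (L : ℕ) (hL : 0 < L) (m : ℤ) :
    ∑ j ∈ Finset.range L, Complex.exp (2 * Real.pi * j * m / L * Complex.I) =
      if (L:ℤ) ∣ m then (L:ℂ) else 0 := by
  have hLC : (L:ℂ) ≠ 0 := Nat.cast_ne_zero.mpr hL.ne'
  set z : ℂ := Complex.exp (2 * Real.pi * m / L * Complex.I) with hz
  have hpow : ∀ j : ℕ, Complex.exp (2 * Real.pi * j * m / L * Complex.I) = z ^ j := by
    intro j
    rw [hz, ← Complex.exp_nat_mul]
    ring_nf
  simp only [hpow]
  by_cases hdvd : (L:ℤ) ∣ m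
  · obtain ⟨c, hc⟩ := id hdvd
    have hz1 : z = 1 := by
      rw [hz]
      have : (2 : ℂ) * Real.pi * m / L * Complex.I = c * (2 * Real.pi * Complex.I) := by
        have : (m : ℂ) = L * c := by exact_mod_cast hc
        rw [this]; field_simp
      rw [this]
      exact_mod_cast Complex.exp_int_mul_two_pi_mul_I c
    simp [hz1, hdvd]
  · have hz1 : z ≠ 1 := by
      intro h
      rw [hz, Complex.exp_eq_one_iff] at h
      obtain ⟨n, hn⟩ := h
      apply hdvd
      refine ⟨n, ?_⟩
      have hI : (Complex.I : ℂ) ≠ 0 := Complex.I_ne_zero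
      have hpi : (Real.pi : ℂ) ≠ 0 := by exact_mod_cast Real.pi_ne_zero
      have key : (m : ℂ) = L * n := by
        field_simp at hn
        have h1 : (2 * Real.pi * Complex.I) * (m : ℂ) = (2 * Real.pi * Complex.I) * (L * n) := by
          linear_combination (2 * Real.pi * Complex.I) * hn
        have h2 : (2 * Real.pi * Complex.I : ℂ) ≠ 0 := by
          simp [hpi, hI]
        exact mul_left_cancel₀ h2 h1
      exact_mod_cast key
    rw [geom_sum_eq hz1]
    have hzL : z ^ L = 1 := by
      rw [hz, ← Complex.exp_nat_mul]
      have : (L:ℂ) * (2 * Real.pi * m / L * Complex.I) = m * (2 * Real.pi * Complex.I) := by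
        field_simp
      rw [this]
      exact_mod_cast Complex.exp_int_mul_two_pi_mul_I m
    simp [hzL, hdvd]

lemma cb_zero_of_big (L : ℕ) (hL : 1 ≤ L) (t : ℕ) (r k : ℤ) (hk : (t:ℤ) + |r| < |k|) :
    Cb t (r + k * L) = 0 := by
  rw [Cb, if_neg]
  rintro ⟨h1, h2⟩
  have habs : |r + k * L| ≤ (t:ℤ) := by
    rw [abs_of_nonneg h1]; exact h2
  have h3 : |k * (L:ℤ)| ≤ (t:ℤ) + |r| := by
    calc |k * (L:ℤ)| = |(r + k * L) - r| := by ring_nf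
    _ ≤ |r + k * L| + |r| := abs_sub _ _
    _ ≤ (t:ℤ) + |r| := by linarith
  have h4 : |k| ≤ |k * (L:ℤ)| := by
    rw [abs_mul]
    have : (1:ℤ) ≤ |(L:ℤ)| := by
      rw [abs_of_nonneg (by positivity)]; exact_mod_cast hL
    nlinarith [abs_nonneg k]
  linarith

lemma cb_sum_eq (L : ℕ) (hL : 1 ≤ L) (t : ℕ) (r B : ℤ) (hB : |r| + t ≤ B) :
    ∑ k ∈ Finset.Icc (-B) B, (Cb t (r + k * L) : ℝ)
      = ∑ n ∈ Finset.range (t+1), (if (L:ℤ) ∣ ((n:ℤ) - r) then (t.choose n : ℝ) else 0) := by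
  have hL0 : (L:ℤ) ≠ 0 := by positivity
  have stepA : ∀ k : ℤ, (Cb t (r + k * L) : ℝ)
      = ∑ n ∈ Finset.range (t+1), (if ((n:ℤ) = r + k * L) then (t.choose n : ℝ) else 0) := by
    intro k
    by_cases hc : 0 ≤ r + k * L ∧ r + k * L ≤ (t:ℤ)
    · rw [Cb, if_pos hc]
      rw [Finset.sum_eq_single ((r + k * L).toNat)]
      · rw [if_pos (by rw [Int.toNat_of_nonneg hc.1])]
        push_cast; ring
      · intro b _ hb
        rw [if_neg]
        intro hbe
        apply hb
        omega
      · intro hnot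
        exfalso
        apply hnot
        rw [Finset.mem_range]
        omega
    · rw [Cb, if_neg hc]
      rw [Finset.sum_eq_zero]
      · simp
      intro n hn
      rw [Finset.mem_range] at hn
      rw [if_neg]
      intro hne
      apply hc
      omega
  have stepB : ∀ n ∈ Finset.range (t+1),
      (if (L:ℤ) ∣ ((n:ℤ) - r) then (t.choose n : ℝ) else 0)
      = ∑ k ∈ Finset.Icc (-B) B, (if ((n:ℤ) = r + k * L) then (t.choose n : ℝ) else 0) := by
    intro n hn
    rw [Finset.mem_range] at hn
    by_cases hdvd : (L:ℤ) ∣ ((n:ℤ) - r)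
    · obtain ⟨c, hc⟩ := hdvd
      rw [mul_comm] at hc
      rw [if_pos ⟨c, by rw [hc]; ring⟩]
      rw [Finset.sum_eq_single c]
      · rw [if_pos (by omega)]
      · intro b _ hb
        rw [if_neg]
        intro hbe
        apply hb
        have : b * (L:ℤ) = c * L := by omega
        exact mul_right_cancel₀ hL0 (by linarith)
      · intro hnot
        exfalso
        apply hnot
        rw [Finset.mem_Icc]
        have h1 : |c * (L:ℤ)| ≤ (t:ℤ) + |r| := by
          have : c * (L:ℤ) = (n:ℤ) - r := by omega
          rw [this]
          calc |(n:ℤ) - r| ≤ |(n:ℤ)| + |r| := abs_sub _ _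
          _ ≤ (t:ℤ) + |r| := by
            have : |(n:ℤ)| ≤ (t:ℤ) := by rw [abs_of_nonneg (by positivity)]; omega
            linarith
        have h2 : |c| ≤ |c * (L:ℤ)| := by
          rw [abs_mul]
          have : (1:ℤ) ≤ |(L:ℤ)| := by
            rw [abs_of_nonneg (by positivity)]; exact_mod_cast hL
          nlinarith [abs_nonneg c]
        have := abs_le.mp (le_trans h2 h1)
        omega
    · rw [if_neg hdvd]
      rw [Finset.sum_eq_zero]
      intro k _
      rw [if_neg]
      intro hke
      exact hdvd ⟨k, by rw [hke]; ring⟩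
  rw [Finset.sum_congr rfl stepB, Finset.sum_congr rfl (fun k _ => stepA k), Finset.sum_comm]

lemma Fc_eq (L t : ℕ) (hL : 0 < L) (r : ℤ) :
    ((∑ n ∈ Finset.range (t+1), if (L:ℤ) ∣ ((n:ℤ) - r) then (t.choose n : ℝ) else 0 : ℝ) : ℂ)
      = (1/(L:ℂ)) * ∑ j ∈ Finset.range L,
          Complex.exp (-(2 * Real.pi * j * r / L) * Complex.I) *
            (1 + Complex.exp (2 * Real.pi * j / L * Complex.I)) ^ t := by
  have hLC : (L:ℂ) ≠ 0 := Nat.cast_ne_zero.mpr hL.ne'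
  rw [Complex.ofReal_sum]
  simp only [apply_ite (Complex.ofReal), Complex.ofReal_zero, Complex.ofReal_natCast]
  have step1 : ∀ n : ℕ,
      (if (L:ℤ) ∣ ((n:ℤ) - r) then ((t.choose n : ℕ) : ℂ) else 0)
        = (t.choose n : ℂ) / L * ∑ j ∈ Finset.range L,
            Complex.exp (2 * Real.pi * j * (((n:ℕ):ℂ) - (r:ℂ)) / L * Complex.I) := by
    intro n
    have hf := filter_sum L hL ((n:ℤ) - r)
    push_cast at hf
    rw [hf]
    by_cases h : (L:ℤ) ∣ ((n:ℤ) - r)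
    · rw [if_pos h, if_pos h]
      field_simp
    · rw [if_neg h, if_neg h, mul_zero]
  rw [Finset.sum_congr rfl (fun n _ => step1 n)]
  simp only [Finset.mul_sum]
  rw [Finset.sum_comm]
  refine Finset.sum_congr rfl (fun j _ => ?_)
  have hsplit : ∀ n : ℕ,
      Complex.exp (2 * Real.pi * j * (((n:ℕ):ℂ) - (r:ℂ)) / L * Complex.I)
        = Complex.exp (-(2 * Real.pi * j * r / L) * Complex.I) *
            Complex.exp (2 * Real.pi * j / L * Complex.I) ^ n := by
    intro n
    rw [← Complex.exp_nat_mul, ← Complex.exp_add]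
    congr 1
    field_simp
    ring
  simp only [hsplit]
  rw [add_comm (1:ℂ), add_pow]
  rw [Finset.mul_sum, Finset.mul_sum]
  refine Finset.sum_congr rfl (fun n _ => ?_)
  simp only [one_pow]
  ring

lemma one_add_exp (c : ℝ) :
    (1:ℂ) + Complex.exp (((2*c : ℝ):ℂ) * Complex.I)
      = ((2 * Real.cos c : ℝ):ℂ) * Complex.exp (((c:ℝ):ℂ) * Complex.I) := by
  rw [show ((2*c : ℝ):ℂ) = ((c:ℝ):ℂ) + ((c:ℝ):ℂ) by push_cast; ring, add_mul,
    Complex.exp_add, Complex.exp_mul_I]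
  rw [Complex.ofReal_mul, Complex.ofReal_ofNat, Complex.ofReal_cos]
  linear_combination (Complex.sin ((c:ℝ):ℂ))^2 * Complex.I_sq - Complex.sin_sq_add_cos_sq ((c:ℝ):ℂ)

lemma exp_sub_exp (u v : ℝ) :
    Complex.exp (((-u : ℝ):ℂ) * Complex.I) - Complex.exp (((-(u+2*v) : ℝ):ℂ) * Complex.I)
      = ((2 * Real.sin v : ℝ):ℂ) * Complex.I * Complex.exp (((-(u+v) : ℝ):ℂ) * Complex.I) := by
  rw [show ((-u : ℝ):ℂ) = ((-(u+v) : ℝ):ℂ) + ((v:ℝ):ℂ) by push_cast; ring,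
      show ((-(u+2*v) : ℝ):ℂ) = ((-(u+v) : ℝ):ℂ) + ((-v:ℝ):ℂ) by push_cast; ring,
      add_mul, add_mul, Complex.exp_add, Complex.exp_add,
      Complex.exp_mul_I, Complex.exp_mul_I, Complex.exp_mul_I]
  simp only [Complex.ofReal_neg, Complex.ofReal_add, Complex.cos_neg, Complex.sin_neg,
    Complex.ofReal_mul, Complex.ofReal_ofNat, Complex.ofReal_sin]
  ring

lemma term_full (t : ℕ) (u v c : ℝ) :
    (Complex.exp (((-u : ℝ):ℂ) * Complex.I) - Complex.exp (((-(u+2*v) : ℝ):ℂ) * Complex.I)) *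
        ((1:ℂ) + Complex.exp (((2*c : ℝ):ℂ) * Complex.I)) ^ t
      = ((2^(t+1) * Real.cos c ^ t * Real.sin v * Real.sin (u + v - t*c) : ℝ):ℂ)
        + ((2^(t+1) * Real.cos c ^ t * Real.sin v * Real.cos (u + v - t*c) : ℝ):ℂ) * Complex.I := by
  rw [exp_sub_exp, one_add_exp, mul_pow, ← Complex.exp_nat_mul]
  rw [show (t:ℂ) * (((c:ℝ):ℂ) * Complex.I) = ((t*c : ℝ):ℂ) * Complex.I by push_cast; ring]
  rw [show ((2 * Real.sin v : ℝ):ℂ) * Complex.I * Complex.exp (((-(u+v) : ℝ):ℂ) * Complex.I) *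
        (((2 * Real.cos c : ℝ):ℂ)^t * Complex.exp (((t*c : ℝ):ℂ) * Complex.I))
      = ((2 * Real.sin v : ℝ):ℂ) * ((2 * Real.cos c : ℝ):ℂ)^t * Complex.I *
        (Complex.exp (((-(u+v) : ℝ):ℂ) * Complex.I) * Complex.exp (((t*c : ℝ):ℂ) * Complex.I)) by ring,
    ← Complex.exp_add,
    show ((-(u+v) : ℝ):ℂ) * Complex.I + ((t*c : ℝ):ℂ) * Complex.I
      = ((-(u+v-t*c) : ℝ):ℂ) * Complex.I by push_cast; ring,
    Complex.exp_mul_I]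
  simp only [Complex.ofReal_neg, Complex.cos_neg, Complex.sin_neg, ← Complex.ofReal_cos,
    ← Complex.ofReal_sin]
  push_cast
  linear_combination (-(2^(t+1) * Complex.sin ((v:ℝ):ℂ) * Complex.cos ((c:ℝ):ℂ) ^ t *
    Complex.sin (((u:ℝ):ℂ) + ((v:ℝ):ℂ) - ((t:ℕ):ℂ) * ((c:ℝ):ℂ)))) * Complex.I_sq

lemma half_sum (L : ℕ) (hL : 2 ≤ L) (g : ℕ → ℝ) (h0 : g 0 = 0)
    (hsym : ∀ j, 1 ≤ j → j ≤ L - 1 → g (L - j) = g j)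
    (hmid : L % 2 = 0 → g (L / 2) = 0) :
    ∑ j ∈ Finset.range L, g j = 2 * ∑ j ∈ Finset.Icc 1 ((L-1)/2), g j := by
  set M := (L-1)/2 with hM
  have h1 : Finset.range L = Finset.Icc 0 (L-1) := by
    ext x; simp [Finset.mem_Icc]; omega
  have h2 : Finset.Icc 0 (L-1) = Finset.cons 0 (Finset.Ioc 0 (L-1)) (by simp) := by
    rw [Finset.Icc_eq_cons_Ioc (by omega)]
  rw [h1, h2, Finset.sum_cons, h0, zero_add]
  have h3 : ∑ j ∈ Finset.Ioc 0 M, g j + ∑ j ∈ Finset.Ioc M (L-1), g j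
      = ∑ j ∈ Finset.Ioc 0 (L-1), g j :=
    Finset.sum_Ioc_consecutive _ (by omega) (by omega)
  have h4 : ∑ j ∈ Finset.Ioc M (L-1), g j = ∑ j ∈ Finset.Ioc 0 (L-1-M), g j := by
    refine Finset.sum_nbij' (fun a => L - a) (fun a => L - a) ?_ ?_ ?_ ?_ ?_
    · intro a ha; simp only [Finset.mem_Ioc] at *; omega
    · intro a ha; simp only [Finset.mem_Ioc] at *; omega
    · intro a ha; simp only [Finset.mem_Ioc] at ha; show L - (L - a) = a; omega
    · intro a ha; simp only [Finset.mem_Ioc] at ha; show L - (L - a) = a; omega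
    · intro a ha; simp only [Finset.mem_Ioc] at ha
      exact (hsym a (by omega) (by omega)).symm
  have hIcc : Finset.Icc 1 M = Finset.Ioc 0 M := by
    ext x; simp [Finset.mem_Icc, Finset.mem_Ioc]; omega
  rw [hIcc]
  by_cases hpar : L % 2 = 0
  · have h5 : L - 1 - M = M + 1 := by omega
    rw [h5] at h4
    have h6 : ∑ j ∈ Finset.Ioc 0 (M+1), g j = ∑ j ∈ Finset.Ioc 0 M, g j + g (M+1) :=
      Finset.sum_Ioc_succ_top (by omega) _
    have h7 : g (M+1) = 0 := by
      have : M + 1 = L / 2 := by omega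
      rw [this]; exact hmid hpar
    rw [h6, h7, add_zero] at h4
    rw [← h3, h4]; ring
  · have h5 : L - 1 - M = M := by omega
    rw [h5] at h4
    rw [← h3, h4]; ring

/-- Real trigonometric closed form of the method-of-images sum. -/
theorem stmt_6 (L : ℕ) (hL : 2 ≤ L) (s0 : ℤ) (hs0 : 0 < s0) (hs0L : s0 < (L : ℤ))
    (t' : ℕ) (ht' : 1 ≤ t') (r' : ℤ) :
    ∑' k : ℤ, ((Cb t' (r' + k * L) : ℝ) - (Cb t' (r' + s0 + k * L) : ℝ))
      = (4 / (L : ℝ)) * ∑ k ∈ Finset.Icc 1 ((L - 1) / 2),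
          2 ^ t' * Real.cos (Real.pi * k / L) ^ t' *
            Real.sin (Real.pi * k * s0 / L) *
            Real.sin (Real.pi * k * ((2 * r' + s0 - t' : ℤ) : ℝ) / L) := by
  have hL1 : 1 ≤ L := by omega
  have hL0 : 0 < L := by omega
  have hLR : (L:ℝ) ≠ 0 := Nat.cast_ne_zero.mpr hL0.ne'
  set m : ℤ := 2 * r' + s0 - t' with hm
  set B : ℤ := |r'| + |s0| + t' with hB
  set g : ℕ → ℝ := fun j => 2 ^ t' * Real.cos (Real.pi * j / L) ^ t' *
            Real.sin (Real.pi * j * s0 / L) *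
            Real.sin (Real.pi * j * ((m : ℤ) : ℝ) / L) with hg
  -- Step 1: tsum to finite sum
  have hsupp : ∀ k : ℤ, k ∉ Finset.Icc (-B) B →
      ((Cb t' (r' + k * L) : ℝ) - (Cb t' (r' + s0 + k * L) : ℝ)) = 0 := by
    intro k hk
    rw [Finset.mem_Icc] at hk
    have habs : B < |k| := by
      rcases abs_cases k with ⟨h, _⟩ | ⟨h, _⟩ <;> omega
    have h1 : |r'| ≥ 0 := abs_nonneg _
    have h2 : |s0| ≥ 0 := abs_nonneg _
    have h3 : |r' + s0| ≤ |r'| + |s0| := abs_add_le _ _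
    rw [cb_zero_of_big L hL1 t' r' k (by omega),
        cb_zero_of_big L hL1 t' (r' + s0) k (by omega)]
    simp
  rw [tsum_eq_sum hsupp, Finset.sum_sub_distrib,
    cb_sum_eq L hL1 t' r' B (by have := abs_nonneg s0; omega),
    cb_sum_eq L hL1 t' (r' + s0) B
      (by have := abs_add_le r' s0; have := abs_nonneg s0; omega)]
  -- Step 2: complex evaluation
  have hterm : ∀ j ∈ Finset.range L,
      Complex.exp (-(2 * Real.pi * j * r' / L) * Complex.I) *
          (1 + Complex.exp (2 * Real.pi * j / L * Complex.I)) ^ t' -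
        Complex.exp (-(2 * Real.pi * j * ((r' + s0 : ℤ) : ℂ) / L) * Complex.I) *
          (1 + Complex.exp (2 * Real.pi * j / L * Complex.I)) ^ t'
      = ((2 * g j : ℝ) : ℂ) +
        ((2 * (2 ^ t' * Real.cos (Real.pi * j / L) ^ t' *
            Real.sin (Real.pi * j * s0 / L) *
            Real.cos (Real.pi * j * ((m : ℤ) : ℝ) / L)) : ℝ) : ℂ) * Complex.I := by
    intro j _
    set u : ℝ := 2 * Real.pi * j * r' / L with hu
    set v : ℝ := Real.pi * j * s0 / L with hv
    set c : ℝ := Real.pi * j / L with hc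
    have e1 : -(2 * (Real.pi:ℂ) * j * r' / L) * Complex.I = ((-u : ℝ):ℂ) * Complex.I := by
      rw [hu]; push_cast; ring
    have e2 : -(2 * (Real.pi:ℂ) * j * ((r' + s0 : ℤ) : ℂ) / L) * Complex.I
        = ((-(u + 2*v) : ℝ):ℂ) * Complex.I := by
      rw [hu, hv]; push_cast; field_simp
    have e3 : 2 * (Real.pi:ℂ) * j / L * Complex.I = ((2*c : ℝ):ℂ) * Complex.I := by
      rw [hc]; push_cast; ring
    rw [e1, e2, e3, ← sub_mul, term_full t' u v c]
    have harg : u + v - t' * c = Real.pi * j * ((m : ℤ) : ℝ) / L := by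
      rw [hu, hv, hc, hm]; push_cast; field_simp
    rw [harg, hg]
    simp only [hu, hv, hc]
    push_cast [pow_succ]
    ring
  have hC : ((((∑ n ∈ Finset.range (t'+1),
          if (L:ℤ) ∣ ((n:ℤ) - r') then (t'.choose n : ℝ) else 0) -
        ∑ n ∈ Finset.range (t'+1),
          if (L:ℤ) ∣ ((n:ℤ) - (r' + s0)) then (t'.choose n : ℝ) else 0) : ℝ) : ℂ)
      = ((((1:ℝ)/L) * ∑ j ∈ Finset.range L, 2 * g j : ℝ) : ℂ) +
        ((((1:ℝ)/L) * ∑ j ∈ Finset.range L,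
          2 * (2 ^ t' * Real.cos (Real.pi * j / L) ^ t' *
            Real.sin (Real.pi * j * s0 / L) *
            Real.cos (Real.pi * j * ((m : ℤ) : ℝ) / L)) : ℝ) : ℂ) * Complex.I := by
    rw [Complex.ofReal_sub, Fc_eq L t' hL0 r', Fc_eq L t' hL0 (r' + s0),
      ← mul_sub, ← Finset.sum_sub_distrib, Finset.sum_congr rfl hterm,
      Finset.sum_add_distrib]
    push_cast
    rw [← Finset.sum_mul]
    ring
  have hre := congrArg Complex.re hC
  simp only [Complex.ofReal_re, Complex.add_re, Complex.mul_re, Complex.I_re,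
    Complex.I_im, Complex.ofReal_im, mul_zero, mul_one, zero_sub, sub_zero,
    zero_mul, add_zero, neg_zero] at hre
  rw [hre]
  -- Step 3: fold the sum
  have hsym : ∀ j, 1 ≤ j → j ≤ L - 1 → g (L - j) = g j := by
    intro j hj1 hj2
    have hjL : (j:ℝ) ≤ (L:ℝ) := by exact_mod_cast Nat.le_of_lt (by omega)
    have hcast : ((L - j : ℕ) : ℝ) = (L:ℝ) - (j:ℝ) := by
      push_cast [Nat.cast_sub (by omega : j ≤ L)]; ring
    have a1 : Real.pi * ((L - j : ℕ):ℝ) / L = Real.pi - Real.pi * j / L := by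
      rw [hcast]; field_simp
    have a2 : Real.pi * ((L - j : ℕ):ℝ) * s0 / L = (s0:ℝ) * Real.pi - Real.pi * j * s0 / L := by
      rw [hcast]; field_simp
    have a3 : Real.pi * ((L - j : ℕ):ℝ) * ((m:ℤ):ℝ) / L
        = ((m:ℤ):ℝ) * Real.pi - Real.pi * j * ((m:ℤ):ℝ) / L := by
      rw [hcast]; field_simp
    have b1 : Real.cos (Real.pi * ((L - j : ℕ):ℝ) / L) = - Real.cos (Real.pi * j / L) := by
      rw [a1, Real.cos_pi_sub]
    have sinsub : ∀ (z : ℤ) (x : ℝ), Real.sin ((z:ℝ) * Real.pi - x)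
        = - Real.cos ((z:ℝ) * Real.pi) * Real.sin x := by
      intro z x
      rw [Real.sin_sub, Real.sin_int_mul_pi]
      ring
    have b2 : Real.sin (Real.pi * ((L - j : ℕ):ℝ) * s0 / L)
        = - Real.cos ((s0:ℝ) * Real.pi) * Real.sin (Real.pi * j * s0 / L) := by
      rw [a2, sinsub s0]
    have b3 : Real.sin (Real.pi * ((L - j : ℕ):ℝ) * ((m:ℤ):ℝ) / L)
        = - Real.cos (((m:ℤ):ℝ) * Real.pi) * Real.sin (Real.pi * j * ((m:ℤ):ℝ) / L) := by
      rw [a3, sinsub m]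
    have hsign : (-1:ℝ)^t' * (Real.cos ((s0:ℝ) * Real.pi) * Real.cos (((m:ℤ):ℝ) * Real.pi)) = 1 := by
      have c1 : Real.cos ((s0:ℝ) * Real.pi) * Real.cos (((m:ℤ):ℝ) * Real.pi)
          = Real.cos ((s0:ℝ) * Real.pi + ((m:ℤ):ℝ) * Real.pi) := by
        rw [Real.cos_add, Real.sin_int_mul_pi]
        ring
      have c2 : (s0:ℝ) * Real.pi + ((m:ℤ):ℝ) * Real.pi
          = ((r' + s0 : ℤ):ℝ) * (2 * Real.pi) - (t':ℝ) * Real.pi := by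
        rw [hm]; push_cast; ring
      have c3 : Real.cos (((r' + s0 : ℤ):ℝ) * (2 * Real.pi) - (t':ℝ) * Real.pi)
          = Real.cos ((t':ℝ) * Real.pi) := Real.cos_int_mul_two_pi_sub _ _
      have c4 : Real.cos ((t':ℝ) * Real.pi) = (-1:ℝ)^t' := by
        have := Real.cos_nat_mul_pi_sub 0 t'
        simpa using this
      rw [c1, c2, c3, c4, ← mul_pow]
      norm_num
    rw [hg]
    simp only [b1, b2, b3]
    have expand : (-Real.cos (Real.pi * ↑j / ↑L)) ^ t' = (-1:ℝ)^t' * Real.cos (Real.pi * ↑j / ↑L) ^ t' := by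
      rw [neg_pow]
    rw [expand]
    linear_combination (2^t' * Real.cos (Real.pi * (j:ℝ) / L)^t' *
      Real.sin (Real.pi * (j:ℝ) * (s0:ℝ) / L) *
      Real.sin (Real.pi * (j:ℝ) * ((m:ℤ):ℝ) / L)) * hsign
  have hmid : L % 2 = 0 → g (L / 2) = 0 := by
    intro hpar
    have h2L : L = 2 * (L / 2) := by omega
    have hcast : ((L / 2 : ℕ) : ℝ) = (L:ℝ) / 2 := by
      have hc2 : (L:ℝ) = 2 * ((L/2 : ℕ):ℝ) := by exact_mod_cast h2L
      rw [hc2]; ring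
    have : Real.pi * ((L / 2 : ℕ):ℝ) / L = Real.pi / 2 := by
      rw [hcast]; field_simp
    rw [hg]
    simp only [this, Real.cos_pi_div_two]
    rw [zero_pow (by omega : t' ≠ 0)]
    ring
  have h0 : g 0 = 0 := by
    rw [hg]; simp
  rw [← Finset.mul_sum, half_sum L hL g h0 hsym hmid]
  field_simp
  ring
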